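/- arXiv:2007.11835 — 2 statements merged into one kernel-verified Lean document; each statement's English description precedes it below -/
import Mathlib

section
/- Under assumptions A2 and A3 (with x̃ ∈ S), and given a FOM solution x and any x̃ ∈ S, the following two-sided bound holds: max( max_{1≤i≤n_d} ‖PΩ_i(x − x̃)‖₂ , max_{1≤j≤n_p} ‖P̄^j(x − x̃)‖₂ ) ≤ ‖x − x̃‖₂ ≤ (1/(P·κℓ)) · ( Σ_{i=1}^{n_d} ‖B_i r_i(PΩ_i x̃, PΓ_i x̃)‖₂² )^{1/2}. -/
open Matrix

/-- Euclidean norm of a vector in `ℝ^d`. -/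
noncomputable def enormFin {d : ℕ} (v : Fin d → ℝ) : ℝ :=
  Real.sqrt (∑ j, v j ^ 2)

/-- Maximum of a real-valued family over `Fin k` (for `k > 0`). -/
noncomputable def finMax {k : ℕ} (hk : 0 < k) (f : Fin k → ℝ) : ℝ :=
  Finset.univ.sup' (Finset.univ_nonempty_iff.mpr (Fin.pos_iff_nonempty.mp hk)) f

lemma enorm_nonneg' {d : ℕ} (v : Fin d → ℝ) : 0 ≤ enormFin v := Real.sqrt_nonneg _

lemma enorm_neg' {d : ℕ} (v : Fin d → ℝ) : enormFin (-v) = enormFin v := by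
  unfold enormFin; congr 1; exact Finset.sum_congr rfl fun j _ => by simp

lemma sel_norm_le {k n : ℕ} (σ : Fin k → Fin n) (hσ : Function.Injective σ)
    (M : Matrix (Fin k) (Fin n) ℝ) (hM : ∀ q j, M q j = if j = σ q then 1 else 0)
    (v : Fin n → ℝ) : enormFin (M.mulVec v) ≤ enormFin v := by
  unfold enormFin
  apply Real.sqrt_le_sqrt
  have hmv : ∀ q, M.mulVec v q = v (σ q) := by
    intro q
    simp [Matrix.mulVec, dotProduct, hM]
  calc ∑ q, M.mulVec v q ^ 2 = ∑ q, v (σ q) ^ 2 := by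
        exact Finset.sum_congr rfl fun q _ => by rw [hmv]
    _ = ∑ j ∈ Finset.univ.image σ, v j ^ 2 := by
        rw [Finset.sum_image (fun a _ b _ h => hσ h)]
    _ ≤ ∑ j, v j ^ 2 := by
        apply Finset.sum_le_sum_of_subset_of_nonneg (Finset.subset_univ _)
        intro j _ _; positivity

/-- a posteriori error bound: under A2 and A3 (with `xt ∈ S`), for a FOM
solution `x` and any `xt ∈ S`,
`max(maxᵢ ‖PΩᵢ(x − xt)‖₂, maxⱼ ‖P̄ʲ(x − xt)‖₂) ≤ ‖x − xt‖₂
  ≤ (1/(P·κℓ))·(Σᵢ ‖Bᵢ rᵢ(PΩᵢ xt, PΓᵢ xt)‖₂²)^{1/2}`. -/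
theorem stmt0
    (n nd np : ℕ) (hn : 0 < n) (hnd : 0 < nd) (hnp : 0 < np)
    (nΩ nΓ nr m : Fin nd → ℕ)
    (r : ∀ i : Fin nd, (Fin (nΩ i) → ℝ) → (Fin (nΓ i) → ℝ) → (Fin (nr i) → ℝ))
    (PΩ : ∀ i : Fin nd, Matrix (Fin (nΩ i)) (Fin n) ℝ)
    (PΓ : ∀ i : Fin nd, Matrix (Fin (nΓ i)) (Fin n) ℝ)
    (B : ∀ i : Fin nd, Matrix (Fin (m i)) (Fin (nr i)) ℝ)
    (σΩ : ∀ i : Fin nd, Fin (nΩ i) → Fin n)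
    (hσΩinj : ∀ i, Function.Injective (σΩ i))
    (hPΩrows : ∀ i q j, PΩ i q j = if j = σΩ i q then 1 else 0)
    (σΓ : ∀ i : Fin nd, Fin (nΓ i) → Fin n)
    (hσΓinj : ∀ i, Function.Injective (σΓ i))
    (hPΓrows : ∀ i q j, PΓ i q j = if j = σΓ i q then 1 else 0)
    -- port extraction matrices
    (nP : Fin np → ℕ)
    (Pbar : ∀ j : Fin np, Matrix (Fin (nP j)) (Fin n) ℝ)
    (σP : ∀ j : Fin np, Fin (nP j) → Fin n)
    (hσPinj : ∀ j, Function.Injective (σP j))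
    (hPbarrows : ∀ j q l, Pbar j q l = if l = σP j q then 1 else 0)
    -- row-index sets of `PΩ₁,…,PΩ_nd, P̄¹,…,P̄^np` are pairwise disjoint and cover `{1,…,n}`
    (hdisjΩΩ : ∀ i i', i ≠ i' → Disjoint (Set.range (σΩ i)) (Set.range (σΩ i')))
    (hdisjPP : ∀ j j', j ≠ j' → Disjoint (Set.range (σP j)) (Set.range (σP j')))
    (hdisjΩP : ∀ i j, Disjoint (Set.range (σΩ i)) (Set.range (σP j)))
    (hcover : ∀ l : Fin n, (∃ i q, σΩ i q = l) ∨ (∃ j q, σP j q = l))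
    (S : Set (Fin n → ℝ))
    (κℓ P : ℝ) (hκℓ : 0 < κℓ) (hP : 0 < P)
    (hA2 : ∀ w y : Fin n → ℝ,
      Real.sqrt (∑ i, (enormFin (r i ((PΩ i).mulVec w) ((PΓ i).mulVec w)
          - r i ((PΩ i).mulVec y) ((PΓ i).mulVec y))) ^ 2) ≥ κℓ * enormFin (w - y))
    (hA3 : ∀ w ∈ S,
      Real.sqrt (∑ i, (enormFin ((B i).mulVec (r i ((PΩ i).mulVec w) ((PΓ i).mulVec w)))) ^ 2)
        ≥ P * Real.sqrt (∑ i, (enormFin (r i ((PΩ i).mulVec w) ((PΓ i).mulVec w))) ^ 2))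
    (x : Fin n → ℝ)
    (hx : ∀ i, r i ((PΩ i).mulVec x) ((PΓ i).mulVec x) = 0)
    (xt : Fin n → ℝ) (hxtS : xt ∈ S) :
    max (finMax hnd fun i => enormFin ((PΩ i).mulVec (x - xt)))
        (finMax hnp fun j => enormFin ((Pbar j).mulVec (x - xt)))
      ≤ enormFin (x - xt) ∧
    enormFin (x - xt) ≤ (1 / (P * κℓ)) *
      Real.sqrt (∑ i, (enormFin ((B i).mulVec (r i ((PΩ i).mulVec xt) ((PΓ i).mulVec xt)))) ^ 2) := by
  constructor
  · apply max_le
    · apply Finset.sup'_le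
      intro i _
      exact sel_norm_le (σΩ i) (hσΩinj i) (PΩ i) (hPΩrows i) _
    · apply Finset.sup'_le
      intro j _
      exact sel_norm_le (σP j) (hσPinj j) (Pbar j) (hPbarrows j) _
  · have h2 := hA2 xt x
    have hne : enormFin (xt - x) = enormFin (x - xt) := by
      rw [show xt - x = -(x - xt) by ring, enorm_neg']
    rw [hne] at h2
    simp only [hx, sub_zero] at h2
    have h3 := hA3 xt hxtS
    have hchain : P * κℓ * enormFin (x - xt) ≤
        Real.sqrt (∑ i, (enormFin ((B i).mulVec (r i ((PΩ i).mulVec xt) ((PΓ i).mulVec xt)))) ^ 2) := by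
      calc P * κℓ * enormFin (x - xt) = P * (κℓ * enormFin (x - xt)) := by ring
        _ ≤ P * Real.sqrt (∑ i, (enormFin (r i ((PΩ i).mulVec xt) ((PΓ i).mulVec xt))) ^ 2) := by
            apply mul_le_mul_of_nonneg_left h2 hP.le
        _ ≤ _ := h3
    have hPκ : 0 < P * κℓ := mul_pos hP hκℓ
    rw [div_mul_eq_mul_div, one_mul, le_div_iff₀ hPκ]
    linarith [hchain]
end

section
/- Under assumptions A2, A3 and A4, if x is a FOM solution and x̃ ∈ S minimizes the weighted residual objective w ↦ Σ_{i=1}^{n_d} ‖B_i r_i(PΩ_i w, PΓ_i w)‖₂² over S, then for every w ∈ S one has ‖x − x̃‖₂ ≤ (κu/(P·κℓ)) · ‖x − w‖₂; in particular ‖x − x̃‖₂ ≤ (κu/(P·κℓ)) · inf_{w ∈ S} ‖x − w‖₂. -/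
open Matrix

/-- Euclidean norm of a vector in `ℝ^d`. -/
noncomputable def enorm {d : ℕ} (v : Fin d → ℝ) : ℝ :=
  Real.sqrt (∑ j, v j ^ 2)

lemma enorm_sub_comm {d : ℕ} (a b : Fin d → ℝ) : _root_.enorm (a - b) = _root_.enorm (b - a) := by
  unfold _root_.enorm
  congr 1
  apply Finset.sum_congr rfl
  intro j _
  simp [Pi.sub_apply]
  ring

/-- under A2, A3 and A4, if `x` is a FOM solution and `xt ∈ S` minimizes
the weighted residual objective over `S`, then `‖x − xt‖₂ ≤ (κu/(P·κℓ))·‖x − w‖₂` for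
every `w ∈ S`; in particular `‖x − xt‖₂ ≤ (κu/(P·κℓ))·inf_{w ∈ S} ‖x − w‖₂`. -/
theorem stmt1
    (n nd : ℕ) (hn : 0 < n) (hnd : 0 < nd)
    (nΩ nΓ nr m : Fin nd → ℕ)
    (r : ∀ i : Fin nd, (Fin (nΩ i) → ℝ) → (Fin (nΓ i) → ℝ) → (Fin (nr i) → ℝ))
    (PΩ : ∀ i : Fin nd, Matrix (Fin (nΩ i)) (Fin n) ℝ)
    (PΓ : ∀ i : Fin nd, Matrix (Fin (nΓ i)) (Fin n) ℝ)
    (B : ∀ i : Fin nd, Matrix (Fin (m i)) (Fin (nr i)) ℝ)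
    (σΩ : ∀ i : Fin nd, Fin (nΩ i) → Fin n)
    (hσΩinj : ∀ i, Function.Injective (σΩ i))
    (hPΩrows : ∀ i q j, PΩ i q j = if j = σΩ i q then 1 else 0)
    (σΓ : ∀ i : Fin nd, Fin (nΓ i) → Fin n)
    (hσΓinj : ∀ i, Function.Injective (σΓ i))
    (hPΓrows : ∀ i q j, PΓ i q j = if j = σΓ i q then 1 else 0)
    (S : Set (Fin n → ℝ))
    (κℓ P κu : ℝ) (hκℓ : 0 < κℓ) (hP : 0 < P) (hκu : 0 < κu)
    (hA2 : ∀ w y : Fin n → ℝ,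
      Real.sqrt (∑ i, (_root_.enorm (r i ((PΩ i).mulVec w) ((PΓ i).mulVec w)
          - r i ((PΩ i).mulVec y) ((PΓ i).mulVec y))) ^ 2) ≥ κℓ * _root_.enorm (w - y))
    (hA3 : ∀ w ∈ S,
      Real.sqrt (∑ i, (_root_.enorm ((B i).mulVec (r i ((PΩ i).mulVec w) ((PΓ i).mulVec w)))) ^ 2)
        ≥ P * Real.sqrt (∑ i, (_root_.enorm (r i ((PΩ i).mulVec w) ((PΓ i).mulVec w))) ^ 2))
    (hA4 : ∀ w y : Fin n → ℝ,
      Real.sqrt (∑ i, (_root_.enorm ((B i).mulVec (r i ((PΩ i).mulVec w) ((PΓ i).mulVec w))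
          - (B i).mulVec (r i ((PΩ i).mulVec y) ((PΓ i).mulVec y)))) ^ 2)
        ≤ κu * _root_.enorm (w - y))
    (x : Fin n → ℝ)
    (hx : ∀ i, r i ((PΩ i).mulVec x) ((PΓ i).mulVec x) = 0)
    (xt : Fin n → ℝ) (hxtS : xt ∈ S)
    (hmin : ∀ w ∈ S,
      (∑ i, (_root_.enorm ((B i).mulVec (r i ((PΩ i).mulVec xt) ((PΓ i).mulVec xt)))) ^ 2)
        ≤ ∑ i, (_root_.enorm ((B i).mulVec (r i ((PΩ i).mulVec w) ((PΓ i).mulVec w)))) ^ 2) :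
    (∀ w ∈ S, _root_.enorm (x - xt) ≤ (κu / (P * κℓ)) * _root_.enorm (x - w)) ∧
      _root_.enorm (x - xt) ≤ (κu / (P * κℓ)) * sInf ((fun w => _root_.enorm (x - w)) '' S) := by
  have key : ∀ w ∈ S, _root_.enorm (x - xt) ≤ (κu / (P * κℓ)) * _root_.enorm (x - w) := by
    intro w hwS
    have h2 := hA2 xt x
    simp only [hx, sub_zero] at h2
    have h3 := hA3 xt hxtS
    have h4 := hA4 w x
    simp only [hx, Matrix.mulVec_zero, sub_zero] at h4
    have hmono : Real.sqrt (∑ i, (_root_.enorm ((B i).mulVec (r i ((PΩ i).mulVec xt) ((PΓ i).mulVec xt)))) ^ 2)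
        ≤ Real.sqrt (∑ i, (_root_.enorm ((B i).mulVec (r i ((PΩ i).mulVec w) ((PΓ i).mulVec w)))) ^ 2) :=
      Real.sqrt_le_sqrt (hmin w hwS)
    have e1 : _root_.enorm (xt - x) = _root_.enorm (x - xt) := enorm_sub_comm _ _
    have e2 : _root_.enorm (w - x) = _root_.enorm (x - w) := enorm_sub_comm _ _
    rw [e1] at h2
    rw [e2] at h4
    have hchain : P * (κℓ * _root_.enorm (x - xt)) ≤ κu * _root_.enorm (x - w) := by
      calc P * (κℓ * _root_.enorm (x - xt))
          ≤ P * Real.sqrt (∑ i, (_root_.enorm (r i ((PΩ i).mulVec xt) ((PΓ i).mulVec xt))) ^ 2) := by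
            exact mul_le_mul_of_nonneg_left h2 hP.le
        _ ≤ Real.sqrt (∑ i, (_root_.enorm ((B i).mulVec (r i ((PΩ i).mulVec xt) ((PΓ i).mulVec xt)))) ^ 2) := h3
        _ ≤ Real.sqrt (∑ i, (_root_.enorm ((B i).mulVec (r i ((PΩ i).mulVec w) ((PΓ i).mulVec w)))) ^ 2) := hmono
        _ ≤ κu * _root_.enorm (x - w) := h4
    rw [div_mul_eq_mul_div, le_div_iff₀ (by positivity)]
    nlinarith [hchain]
  refine ⟨key, ?_⟩
  have hne : ((fun w => _root_.enorm (x - w)) '' S).Nonempty := ⟨_, Set.mem_image_of_mem _ hxtS⟩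
  have hc : 0 < κu / (P * κℓ) := by positivity
  rw [← div_le_iff₀' hc]
  apply le_csInf hne
  rintro b ⟨w, hwS, rfl⟩
  rw [div_le_iff₀' hc]
  exact key w hwS
end
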